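/- arXiv:2204.07212 — 7 statements merged into one kernel-verified Lean document; each statement's English description precedes it below -/
import Mathlib

section
/- Let α0, p1, p2 ∈ [0,1] with α0 ≤ 4/5. Define f1 = (2p1p2(1−p1) + (1−2p1+2p1²)(1−p2))², f2 = (1−p2)(1−2p1+2p1²), and α̲ = (α0²f1 + α0(1−α0)f2) / (α0²f1 + 2α0(1−α0)f2 + (1−α0)²). Then α̲ ≤ α0. -/
lemma key (α0 c u : ℝ) (h0 : 0 ≤ α0) (h4 : α0 ≤ 4/5)
    (hc1 : 1/2 ≤ c) (hc2 : c ≤ 1) (hu0 : 0 ≤ u) (hu1 : u ≤ 1) :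
    0 ≤ α0*(1-((1-u)*(1-c)+u*c)^2) + (1-2*α0)*(1-c*u) := by
  set t : ℝ := (1-u)*(1-c)+u*c with htdef
  have ht0 : 0 ≤ t := by
    have := mul_nonneg (by linarith : (0:ℝ) ≤ 1-u) (by linarith : (0:ℝ) ≤ 1-c)
    have := mul_nonneg hu0 (by linarith : (0:ℝ) ≤ c)
    simp only [htdef]; linarith
  have ht1 : t ≤ 1 := by
    have := mul_nonneg hu0 (by linarith : (0:ℝ) ≤ 1-c)
    have := mul_nonneg (by linarith : (0:ℝ) ≤ 1-u) (by linarith : (0:ℝ) ≤ c)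
    simp only [htdef]; nlinarith
  have htsq : 0 ≤ 1 - t^2 := by nlinarith
  have hcu : 0 ≤ 1 - c*u := by nlinarith [mul_nonneg (by linarith : (0:ℝ) ≤ c) hu0]
  have h45 : 0 ≤ 4*(1-t^2) - 3*(1-c*u) := by
    simp only [htdef]
    nlinarith [mul_nonneg (by linarith : (0:ℝ) ≤ c-1/2) (by linarith : (0:ℝ) ≤ 1-c),
      mul_nonneg hu0 (by linarith : (0:ℝ) ≤ 1-u),
      mul_nonneg (mul_nonneg hu0 (by linarith : (0:ℝ) ≤ c-1/2)) (by linarith : (0:ℝ) ≤ 1-c),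
      mul_nonneg (mul_nonneg (mul_nonneg hu0 hu0) (by linarith : (0:ℝ) ≤ c-1/2)) (by linarith : (0:ℝ) ≤ 1-c),
      mul_nonneg (mul_nonneg (mul_nonneg hu0 (by linarith : (0:ℝ) ≤ 1-u)) (by linarith : (0:ℝ) ≤ c-1/2)) (by linarith : (0:ℝ) ≤ c-1/2),
      mul_nonneg (mul_nonneg hu0 (by linarith : (0:ℝ) ≤ 1-u)) (by linarith : (0:ℝ) ≤ c-1/2),
      sq_nonneg (c-1/2), sq_nonneg u]
  rcases le_total α0 (1/2) with h | h
  · nlinarith [mul_nonneg h0 htsq, mul_nonneg (by linarith : (0:ℝ) ≤ 1-2*α0) hcu]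
  · nlinarith [mul_nonneg (by linarith : (0:ℝ) ≤ 4/5-α0) htsq,
      mul_nonneg (by linarith : (0:ℝ) ≤ α0-1/2) h45]

/-- For `α0 ≤ 4/5`, the Byzantine fraction in the all-match set `T̲`
is no larger than `α0`. -/
theorem alpha_low_le_alpha0
    (α0 p1 p2 f1 f2 : ℝ)
    (hα0 : α0 ∈ Set.Icc (0:ℝ) 1) (hp1 : p1 ∈ Set.Icc (0:ℝ) 1)
    (hp2 : p2 ∈ Set.Icc (0:ℝ) 1) (hα04 : α0 ≤ 4/5)
    (hf1 : f1 = (2*p1*p2*(1-p1) + (1-2*p1+2*p1^2)*(1-p2))^2)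
    (hf2 : f2 = (1-p2)*(1-2*p1+2*p1^2)) :
    (α0^2*f1 + α0*(1-α0)*f2) /
      (α0^2*f1 + 2*α0*(1-α0)*f2 + (1-α0)^2) ≤ α0 := by
  obtain ⟨ha0, ha1⟩ := hα0
  obtain ⟨hp10, hp11⟩ := hp1
  obtain ⟨hp20, hp21⟩ := hp2
  set c : ℝ := 1-2*p1+2*p1^2 with hc
  set u : ℝ := 1-p2 with hu
  have hc1 : 1/2 ≤ c := by nlinarith [sq_nonneg (2*p1-1)]
  have hc2 : c ≤ 1 := by nlinarith [mul_nonneg hp10 (sub_nonneg.2 hp11)]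
  have hu0 : 0 ≤ u := by simp only [hu]; linarith
  have hu1 : u ≤ 1 := by simp only [hu]; linarith
  have hf2' : f2 = c*u := by rw [hf2]; ring
  have hf1' : f1 = ((1-u)*(1-c)+u*c)^2 := by
    rw [hf1]; congr 1; simp only [hc, hu]; ring
  have hE := key α0 c u ha0 hα04 hc1 hc2 hu0 hu1
  have hf1nn : 0 ≤ f1 := by rw [hf1']; positivity
  have hf2nn : 0 ≤ f2 := by rw [hf2']; exact mul_nonneg (by linarith) hu0
  have hD : 0 < α0^2*f1 + 2*α0*(1-α0)*f2 + (1-α0)^2 := by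
    have h1 : 0 < (1-α0)^2 := by nlinarith
    nlinarith [mul_nonneg (sq_nonneg α0) hf1nn,
      mul_nonneg (mul_nonneg ha0 (by linarith : (0:ℝ) ≤ 1-α0)) hf2nn]
  rw [div_le_iff₀ hD, hf1', hf2']
  nlinarith [mul_nonneg (mul_nonneg ha0 (by linarith : (0:ℝ) ≤ 1-α0)) hE]
end

section
/- Let α0, p1, p2 ∈ [0,1] with α0 ≤ 4/5. Define f1 = (2p1p2(1−p1) + (1−2p1+2p1²)(1−p2))², f2 = (1−p2)(1−2p1+2p1²), β = α0²f1 + 2α0(1−α0)f2 + (1−α0)², and ᾱ = (α0 − (α0²f1 + α0(1−α0)f2)) / (1 − β). If 1 − β > 0, then ᾱ ≥ α0. -/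
/-- For `α0 ≤ 4/5`, the Byzantine fraction in the mismatch set `T̄`
is at least `α0`, provided the mismatch set has positive probability. -/
theorem alpha_high_ge_alpha0
    (α0 p1 p2 f1 f2 β : ℝ)
    (hα0 : α0 ∈ Set.Icc (0:ℝ) 1) (hp1 : p1 ∈ Set.Icc (0:ℝ) 1)
    (hp2 : p2 ∈ Set.Icc (0:ℝ) 1) (hα04 : α0 ≤ 4/5)
    (hf1 : f1 = (2*p1*p2*(1-p1) + (1-2*p1+2*p1^2)*(1-p2))^2)
    (hf2 : f2 = (1-p2)*(1-2*p1+2*p1^2))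
    (hβ : β = α0^2*f1 + 2*α0*(1-α0)*f2 + (1-α0)^2)
    (hβlt : 1 - β > 0) :
    (α0 - (α0^2*f1 + α0*(1-α0)*f2)) / (1 - β) ≥ α0 := by
  obtain ⟨ha0, ha1⟩ := hα0
  obtain ⟨hp10, hp11⟩ := hp1
  obtain ⟨hp20, hp21⟩ := hp2
  set q : ℝ := 1 - 2*p1 + 2*p1^2 with hqdef
  have hq1 : 1/2 ≤ q := by nlinarith [sq_nonneg (2*p1 - 1)]
  have hq2 : q ≤ 1 := by nlinarith [mul_nonneg hp10 (sub_nonneg.2 hp11)]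
  have hA : 2*p1*p2*(1-p1) + (1-2*p1+2*p1^2)*(1-p2) = (1-q)*p2 + q*(1-p2) := by
    ring
  rw [hA] at hf1
  have hf2' : f2 = q*(1-p2) := by rw [hf2]; ring
  have hf2nn : 0 ≤ f2 := by
    rw [hf2']; exact mul_nonneg (by linarith) (by linarith)
  have hf2le : f2 ≤ 1 := by nlinarith [hf2', mul_nonneg (sub_nonneg.2 hq2) (sub_nonneg.2 hp21)]
  have key1 : 4*f1 ≤ 1 + 3*f2 := by
    rw [hf1, hf2']
    set A : ℝ := (1-q)*p2 + q*(1-p2) with hAdef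
    have hA0 : 0 ≤ A := by nlinarith [mul_nonneg (sub_nonneg.2 hq2) hp20, mul_nonneg (by linarith : (0:ℝ) ≤ q) (sub_nonneg.2 hp21)]
    have hAq : A ≤ q := by nlinarith [mul_nonneg hp20 (by linarith : (0:ℝ) ≤ 2*q-1)]
    have h1 : 0 ≤ A*(q-A) := mul_nonneg hA0 (sub_nonneg.2 hAq)
    have h2 : 0 ≤ p2*(2*q-1)^2 := mul_nonneg hp20 (sq_nonneg (2*q-1))
    have h3 : 0 ≤ (1-p2)*((4*q+1)*(1-q)) :=
      mul_nonneg (sub_nonneg.2 hp21) (mul_nonneg (by linarith) (sub_nonneg.2 hq2))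
    have hid : 1 + 3*(q*(1-p2)) - 4*A^2
        = 4*(A*(q-A)) + p2*(2*q-1)^2 + (1-p2)*((4*q+1)*(1-q)) := by
      rw [hAdef]; ring
    linarith
  have hf1f2 : f2^2 ≤ f1 := by
    rw [hf1, hf2']
    nlinarith [mul_nonneg (sub_nonneg.2 hq2) hp20, mul_nonneg (by linarith : (0:ℝ) ≤ q) (sub_nonneg.2 hp21)]
  have key2 : 0 ≤ (1-α0) + (2*α0-1)*f2 - α0*f1 := by
    have hsq : (1 - f2)^2 = 1 - 2*f2 + f2^2 := by ring
    have h1 : 2*f2 - f1 - 1 ≤ 0 := by linarith [sq_nonneg (1 - f2), hf1f2]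
    have h2 : (4/5 : ℝ) * (2*f2 - f1 - 1) ≤ α0 * (2*f2 - f1 - 1) :=
      mul_le_mul_of_nonpos_right hα04 h1
    have hexp : α0 * (2*f2 - f1 - 1) = 2*(α0*f2) - α0*f1 - α0 := by ring
    linarith [key1]
  rw [ge_iff_le, le_div_iff₀ hβlt]
  have hnn := mul_nonneg (mul_nonneg ha0 (sub_nonneg.2 ha1)) key2
  have hid2 : (α0 - (α0^2*f1 + α0*(1-α0)*f2)) - α0*(1-β)
      = (α0*(1-α0))*((1-α0) + (2*α0-1)*f2 - α0*f1) := by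
    rw [hβ]; ring
  linarith
end

section
/- Let α0, p2 ∈ [0,1] and define, for real p1, g(p1) = (α0²f1(p1) + α0(1−α0)f2(p1)) / (α0²f1(p1) + 2α0(1−α0)f2(p1) + (1−α0)²), where f1(p1) = (2p1p2(1−p1) + (1−2p1+2p1²)(1−p2))² and f2(p1) = (1−p2)(1−2p1+2p1²). Then g has derivative 0 at p1 = 1/2, i.e., p1 = 1/2 is a stationary point of α̲ as a function of p1 for every fixed p2 and α0. -/
lemma hv_half : HasDerivAt (fun x : ℝ => 1-2*x+2*x^2) 0 (1/2 : ℝ) := by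
  have h : HasDerivAt (fun x : ℝ => 1-2*x+2*x^2) (-2 + 2*(2*(1/2:ℝ)^1)) (1/2 : ℝ) := by
    exact (((hasDerivAt_const _ (1:ℝ)).sub ((hasDerivAt_id _).const_mul 2)).add
      ((hasDerivAt_pow 2 _).const_mul 2)).congr_deriv (by ring)
  convert h using 1
  norm_num

lemma hu_half (p2 : ℝ) :
    HasDerivAt (fun x : ℝ => 2*x*p2*(1-x) + (1-2*x+2*x^2)*(1-p2)) 0 (1/2 : ℝ) := by
  have hw : HasDerivAt (fun x : ℝ => x*(1-x)) 0 (1/2 : ℝ) := by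
    have h := (hasDerivAt_id (1/2:ℝ)).mul ((hasDerivAt_const _ (1:ℝ)).sub (hasDerivAt_id _))
    refine h.congr_deriv (Eq.symm ?_)
    simp [id]; ring
  have h := (hw.const_mul (2*p2)).add (hv_half.mul_const (1-p2))
  have heq : (fun x : ℝ => 2*x*p2*(1-x) + (1-2*x+2*x^2)*(1-p2))
      = (fun x : ℝ => 2*p2*(x*(1-x)) + (1-2*x+2*x^2)*(1-p2)) := by
    funext x; ring
  rw [heq]
  refine h.congr_deriv (Eq.symm ?_)
  ring

/-- `p1 = 1/2` is a stationary point of `α̲` as a function of `p1`. -/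
theorem alpha_low_stationary_at_half
    (α0 p2 : ℝ)
    (hα0 : α0 ∈ Set.Icc (0:ℝ) 1) (hp2 : p2 ∈ Set.Icc (0:ℝ) 1) :
    HasDerivAt (fun p1 : ℝ =>
      (α0^2 * (2*p1*p2*(1-p1) + (1-2*p1+2*p1^2)*(1-p2))^2
        + α0*(1-α0) * ((1-p2)*(1-2*p1+2*p1^2))) /
      (α0^2 * (2*p1*p2*(1-p1) + (1-2*p1+2*p1^2)*(1-p2))^2
        + 2*α0*(1-α0) * ((1-p2)*(1-2*p1+2*p1^2)) + (1-α0)^2))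
      0 (1/2 : ℝ) := by
  obtain ⟨h0, h1⟩ := hα0
  obtain ⟨q0, q1⟩ := hp2
  have hu := hu_half p2
  have hv := hv_half
  have hu2 : HasDerivAt (fun x : ℝ => (2*x*p2*(1-x) + (1-2*x+2*x^2)*(1-p2))^2) 0 (1/2:ℝ) := by
    have := hu.pow 2
    refine this.congr_deriv (Eq.symm ?_); ring
  have hnum : HasDerivAt (fun x : ℝ =>
      α0^2 * (2*x*p2*(1-x) + (1-2*x+2*x^2)*(1-p2))^2
        + α0*(1-α0) * ((1-p2)*(1-2*x+2*x^2))) 0 (1/2:ℝ) := by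
    have h := (hu2.const_mul (α0^2)).add ((hv.const_mul (1-p2)).const_mul (α0*(1-α0)))
    have heq : (fun x : ℝ => α0^2 * (2*x*p2*(1-x) + (1-2*x+2*x^2)*(1-p2))^2
        + α0*(1-α0) * ((1-p2)*(1-2*x+2*x^2)))
        = (fun x : ℝ => α0^2 * (2*x*p2*(1-x) + (1-2*x+2*x^2)*(1-p2))^2
        + α0*(1-α0) * ((1-p2)*(1-2*x+2*x^2))) := rfl
    refine h.congr_deriv (Eq.symm ?_); ring
  have hden : HasDerivAt (fun x : ℝ =>
      α0^2 * (2*x*p2*(1-x) + (1-2*x+2*x^2)*(1-p2))^2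
        + 2*α0*(1-α0) * ((1-p2)*(1-2*x+2*x^2)) + (1-α0)^2) 0 (1/2:ℝ) := by
    have h := ((hu2.const_mul (α0^2)).add ((hv.const_mul (1-p2)).const_mul (2*α0*(1-α0)))).add_const ((1-α0)^2)
    refine h.congr_deriv (Eq.symm ?_); ring
  have hne : (α0^2 * (2*(1/2:ℝ)*p2*(1-(1/2:ℝ)) + (1-2*(1/2:ℝ)+2*(1/2:ℝ)^2)*(1-p2))^2
        + 2*α0*(1-α0) * ((1-p2)*(1-2*(1/2:ℝ)+2*(1/2:ℝ)^2)) + (1-α0)^2) ≠ 0 := by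
    have : (α0^2 * (2*(1/2:ℝ)*p2*(1-(1/2:ℝ)) + (1-2*(1/2:ℝ)+2*(1/2:ℝ)^2)*(1-p2))^2
        + 2*α0*(1-α0) * ((1-p2)*(1-2*(1/2:ℝ)+2*(1/2:ℝ)^2)) + (1-α0)^2)
        = α0^2/4 + α0*(1-α0)*(1-p2) + (1-α0)^2 := by ring
    rw [this]
    nlinarith [sq_nonneg α0, sq_nonneg (1-α0), mul_nonneg (mul_nonneg h0 (by linarith : (0:ℝ) ≤ 1-α0)) (by linarith : (0:ℝ) ≤ 1-p2), sq_nonneg (α0 - 1/2)]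
  have h := hnum.div hden hne
  refine h.congr_deriv (Eq.symm ?_)
  rw [eq_comm, div_eq_zero_iff]
  left
  ring
end

section
/- Let Pd, Pf ∈ ℝ with Pd ≠ Pf, and let α, p1 ∈ [0,1]. Define π11 = Pd(1 − αp1) + αp1(1 − Pd) and π10 = Pf(1 − αp1) + αp1(1 − Pf). Then π11 = π10 if and only if α·p1 = 1/2. -/
/-- The effective detection and false alarm probabilities coincide
iff `α·p1 = 1/2`. -/
theorem blinding_condition
    (Pd Pf α p1 : ℝ) (hPdPf : Pd ≠ Pf)
    (hα : α ∈ Set.Icc (0:ℝ) 1) (hp1 : p1 ∈ Set.Icc (0:ℝ) 1)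
    (π11 π10 : ℝ)
    (hπ11 : π11 = Pd*(1 - α*p1) + α*p1*(1 - Pd))
    (hπ10 : π10 = Pf*(1 - α*p1) + α*p1*(1 - Pf)) :
    π11 = π10 ↔ α * p1 = 1/2 := by
  subst hπ11 hπ10
  constructor
  · intro h
    have h2 : (Pd - Pf) * (1 - 2 * (α * p1)) = 0 := by ring_nf; linarith
    rcases mul_eq_zero.1 h2 with h3 | h3
    · exact absurd (by linarith) hPdPf
    · linarith
  · intro h; rw [h]; ring
end

section
/- Let 0 < Pf < Pd < 1 and α, p1 ∈ [0,1]. Define π11 = Pd(1 − αp1) + αp1(1 − Pd) and π10 = Pf(1 − αp1) + αp1(1 − Pf); then π11, π10 ∈ (0,1). Define the Kullback–Leibler divergence D = π11·log(π11/π10) + (1 − π11)·log((1 − π11)/(1 − π10)). Then D = 0 if and only if α·p1 = 1/2. -/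
lemma kl_pos_of_ne (a b : ℝ) (ha0 : 0 < a) (ha1 : a < 1)
    (hb0 : 0 < b) (hb1 : b < 1) (hne : a ≠ b) :
    0 < a * Real.log (a / b) + (1 - a) * Real.log ((1 - a) / (1 - b)) := by
  have h1a : (0:ℝ) < 1 - a := by linarith
  have h1b : (0:ℝ) < 1 - b := by linarith
  have hr1 : Real.log (b / a) < b / a - 1 := by
    apply Real.log_lt_sub_one_of_pos (by positivity)
    intro h
    exact hne (by field_simp at h; linarith)
  have hr2 : Real.log ((1 - b) / (1 - a)) < (1 - b) / (1 - a) - 1 := by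
    apply Real.log_lt_sub_one_of_pos (by positivity)
    intro h
    apply hne
    have := (div_eq_one_iff_eq (by linarith : (1:ℝ) - a ≠ 0)).mp h
    linarith
  have e1 : a * Real.log (a / b) = -(a * Real.log (b / a)) := by
    rw [Real.log_div ha0.ne' hb0.ne', Real.log_div hb0.ne' ha0.ne']; ring
  have e2 : (1 - a) * Real.log ((1 - a) / (1 - b))
      = -((1 - a) * Real.log ((1 - b) / (1 - a))) := by
    rw [Real.log_div h1a.ne' h1b.ne', Real.log_div h1b.ne' h1a.ne']; ring
  have k1 : a * Real.log (b / a) < a * (b / a - 1) :=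
    (mul_lt_mul_iff_right₀ ha0).mpr hr1
  have k2 : (1 - a) * Real.log ((1 - b) / (1 - a)) < (1 - a) * ((1 - b) / (1 - a) - 1) :=
    (mul_lt_mul_iff_right₀ h1a).mpr hr2
  have c1 : a * (b / a - 1) = b - a := by field_simp
  have c2 : (1 - a) * ((1 - b) / (1 - a) - 1) = a - b := by field_simp; ring
  rw [e1, e2]
  nlinarith

/-- The KL divergence between the received-decision distributions under
`H1` and `H0` vanishes iff `α·p1 = 1/2`. -/
theorem kld_zero_iff_blind
    (Pd Pf α p1 : ℝ)
    (hPf : 0 < Pf) (hPfPd : Pf < Pd) (hPd : Pd < 1)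
    (hα : α ∈ Set.Icc (0:ℝ) 1) (hp1 : p1 ∈ Set.Icc (0:ℝ) 1)
    (π11 π10 D : ℝ)
    (hπ11 : π11 = Pd*(1 - α*p1) + α*p1*(1 - Pd))
    (hπ10 : π10 = Pf*(1 - α*p1) + α*p1*(1 - Pf))
    (hD : D = π11 * Real.log (π11 / π10)
      + (1 - π11) * Real.log ((1 - π11) / (1 - π10))) :
    π11 ∈ Set.Ioo (0:ℝ) 1 ∧ π10 ∈ Set.Ioo (0:ℝ) 1 ∧
      (D = 0 ↔ α * p1 = 1/2) := by
  obtain ⟨hα0, hα1⟩ := hα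
  obtain ⟨hp0, hp1'⟩ := hp1
  have ht0 : 0 ≤ α * p1 := mul_nonneg hα0 hp0
  have ht1 : α * p1 ≤ 1 := mul_le_one₀ hα1 hp0 hp1'
  have hPd0 : 0 < Pd := lt_trans hPf hPfPd
  have hPf1 : Pf < 1 := lt_trans hPfPd hPd
  have h11 : π11 ∈ Set.Ioo (0:ℝ) 1 := by
    constructor <;> rw [hπ11] <;>
      nlinarith [mul_nonneg (mul_nonneg hPd0.le hPd0.le) (sub_nonneg.mpr ht1),
        mul_nonneg ht0 (sq_nonneg (1 - Pd)),
        mul_nonneg (sq_nonneg (1 - Pd)) (sub_nonneg.mpr ht1),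
        mul_nonneg ht0 (sq_nonneg Pd), mul_pos hPd0 (show (0:ℝ) < 1 - Pd by linarith)]
  have h10 : π10 ∈ Set.Ioo (0:ℝ) 1 := by
    constructor <;> rw [hπ10] <;>
      nlinarith [mul_nonneg (mul_nonneg hPf.le hPf.le) (sub_nonneg.mpr ht1),
        mul_nonneg ht0 (sq_nonneg (1 - Pf)),
        mul_nonneg (sq_nonneg (1 - Pf)) (sub_nonneg.mpr ht1),
        mul_nonneg ht0 (sq_nonneg Pf), mul_pos hPf (show (0:ℝ) < 1 - Pf by linarith)]
  refine ⟨h11, h10, ?_⟩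
  have hdiff : π11 - π10 = (Pd - Pf) * (1 - 2 * (α * p1)) := by
    rw [hπ11, hπ10]; ring
  constructor
  · intro hD0
    by_contra hne
    have hne' : π11 ≠ π10 := by
      intro h
      apply hne
      have : (Pd - Pf) * (1 - 2 * (α * p1)) = 0 := by rw [← hdiff, h, sub_self]
      rcases mul_eq_zero.mp this with h' | h'
      · linarith
      · linarith
    have := kl_pos_of_ne π11 π10 h11.1 h11.2 h10.1 h10.2 hne'
    rw [← hD] at this
    linarith
  · intro h
    have heq : π11 = π10 := by
      have : π11 - π10 = 0 := by rw [hdiff, h]; ring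
      linarith
    rw [hD, heq, div_self (ne_of_gt h10.1),
      div_self (by linarith [h10.2] : (1:ℝ) - π10 ≠ 0), Real.log_one]
    ring
end

section
/- Let Pd, Pf, p1 ∈ ℝ and π0, π1 ∈ ℝ with π0 + π1 = 1. Define κ10 = (1−Pf)p1 + Pf(1−p1), κ00 = 1 − κ10, κ11 = (1−Pd)p1 + Pd(1−p1), κ01 = 1 − κ11, P_HH = 2π0·Pf(1−Pf) + 2π1·Pd(1−Pd), and P_BH = π0(κ10(1−Pf) + κ00·Pf) + π1(κ11(1−Pd) + κ01·Pd). Then P_BH − P_HH = p1(π0(1−2Pf)² + π1(1−2Pd)²). -/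
/-- Algebraic identity: `P_BH − P_HH = p1(π0(1−2Pf)² + π1(1−2Pd)²)`. -/
theorem pbh_minus_phh
    (Pd Pf p1 π0 π1 : ℝ) (hπ : π0 + π1 = 1)
    (κ10 κ00 κ11 κ01 PHH PBH : ℝ)
    (hκ10 : κ10 = (1-Pf)*p1 + Pf*(1-p1))
    (hκ00 : κ00 = 1 - κ10)
    (hκ11 : κ11 = (1-Pd)*p1 + Pd*(1-p1))
    (hκ01 : κ01 = 1 - κ11)
    (hPHH : PHH = 2*π0*Pf*(1-Pf) + 2*π1*Pd*(1-Pd))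
    (hPBH : PBH = π0*(κ10*(1-Pf) + κ00*Pf) + π1*(κ11*(1-Pd) + κ01*Pd)) :
    PBH - PHH = p1 * (π0*(1-2*Pf)^2 + π1*(1-2*Pd)^2) := by
  subst hκ10 hκ00 hκ11 hκ01 hPHH hPBH; ring
end

section
/- Let Pd, Pf, p1 ∈ [0,1] and π0, π1 > 0 with π0 + π1 = 1. Define κ10 = (1−Pf)p1 + Pf(1−p1), κ00 = 1 − κ10, κ11 = (1−Pd)p1 + Pd(1−p1), κ01 = 1 − κ11, P_HH = 2π0·Pf(1−Pf) + 2π1·Pd(1−Pd), and P_BH = π0(κ10(1−Pf) + κ00·Pf) + π1(κ11(1−Pd) + κ01·Pd). Then P_HH = P_BH if and only if p1 = 0 or (Pd = 1/2 and Pf = 1/2). -/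
/-- `P_HH = P_BH` iff `p1 = 0` or `Pd = Pf = 1/2`. -/
theorem phh_eq_pbh_iff
    (Pd Pf p1 π0 π1 : ℝ)
    (hPd : Pd ∈ Set.Icc (0:ℝ) 1) (hPf : Pf ∈ Set.Icc (0:ℝ) 1)
    (hp1 : p1 ∈ Set.Icc (0:ℝ) 1)
    (hπ0 : 0 < π0) (hπ1 : 0 < π1) (hπ : π0 + π1 = 1)
    (κ10 κ00 κ11 κ01 PHH PBH : ℝ)
    (hκ10 : κ10 = (1-Pf)*p1 + Pf*(1-p1))
    (hκ00 : κ00 = 1 - κ10)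
    (hκ11 : κ11 = (1-Pd)*p1 + Pd*(1-p1))
    (hκ01 : κ01 = 1 - κ11)
    (hPHH : PHH = 2*π0*Pf*(1-Pf) + 2*π1*Pd*(1-Pd))
    (hPBH : PBH = π0*(κ10*(1-Pf) + κ00*Pf) + π1*(κ11*(1-Pd) + κ01*Pd)) :
    PHH = PBH ↔ p1 = 0 ∨ (Pd = 1/2 ∧ Pf = 1/2) := by
  subst hκ10 hκ11 hκ00 hκ01 hPHH hPBH
  constructor
  · intro h
    have key : p1 * (π0 * (1 - 2*Pf)^2 + π1 * (1 - 2*Pd)^2) = 0 := by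
      linear_combination -h
    rcases mul_eq_zero.1 key with h0 | hsum
    · exact Or.inl h0
    · right
      have h1 : π0 * (1 - 2*Pf)^2 = 0 ∧ π1 * (1 - 2*Pd)^2 = 0 := by
        constructor <;> nlinarith [sq_nonneg (1 - 2*Pf), sq_nonneg (1 - 2*Pd),
          mul_nonneg hπ0.le (sq_nonneg (1 - 2*Pf)), mul_nonneg hπ1.le (sq_nonneg (1 - 2*Pd))]
      obtain ⟨ha, hb⟩ := h1
      have hf : (1 - 2*Pf)^2 = 0 := (mul_eq_zero.1 ha).resolve_left hπ0.ne'
      have hd : (1 - 2*Pd)^2 = 0 := (mul_eq_zero.1 hb).resolve_left hπ1.ne'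
      have := pow_eq_zero_iff (n := 2) (by norm_num) |>.1 hf
      have := pow_eq_zero_iff (n := 2) (by norm_num) |>.1 hd
      constructor <;> linarith
  · rintro (h0 | ⟨hd, hf⟩)
    · subst h0; ring
    · subst hd hf; ring
end
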